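/- Let V be a finite node set, w : V × V → ℝ with w(u,v) ≥ 0 for all u,v and Σ_{u ∈ V} w(u,v) ≤ 1 for every v, let v ∈ V, and let r ∈ [0,1]. Form the transformed instance on V' = V ∪ {⋆} with a new node ⋆ ∉ V, and weights w' : V' × V' → ℝ defined by: w'(u, v'') = w(u, v'') for u, v'' ∈ V; w'(v, ⋆) = r; and w'(u, ⋆) = 0 for u ≠ v and w'(⋆, v'') = 0 for all v''. Then for every seed set S ⊆ V, the live-edge DLT influence satisfies F^{w'}_{⋆}(S) = r · F^{w}_{v}(S). -/

import Mathlib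

open Classical

/-- `q^w_v(u) = w(u,v)` for `u ∈ V`, and `q^w_v(⊥) = 1 − Σ_u w(u,v)`. -/
noncomputable def dltQ {V : Type*} [Fintype V] (w : V → V → ℝ) (v : V) : Option V → ℝ
  | some u => w u v
  | none => 1 - ∑ u, w u v

/-- The probability `p^w(X) = Π_v q^w_v(X(v))` of an assignment `X : V → V ∪ {⊥}`. -/
noncomputable def dltProb {V : Type*} [Fintype V] (w : V → V → ℝ) (X : V → Option V) : ℝ :=
  ∏ v, dltQ w v (X v)

/-- `u₀` is `X`-reachable from `S`: there are `v₀ ∈ S, v₁, …, v_k = u₀` with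
`X(v_i) = v_{i−1}` for `1 ≤ i ≤ k`. -/
def dltReach {V : Type*} (X : V → Option V) (S : Finset V) (u₀ : V) : Prop :=
  ∃ s ∈ S, Relation.ReflTransGen (fun a b => X b = some a) s u₀

open Classical in
/-- The live-edge DLT influence `F^w_{u₀}(S)`. -/
noncomputable def dltInf {V : Type*} [Fintype V] [DecidableEq V] (w : V → V → ℝ)
    (S : Finset V) (u₀ : V) : ℝ :=
  ∑ X : V → Option V, dltProb w X * (if dltReach X S u₀ then 1 else 0)

/-- Lift an assignment on `V` to one on `Option V`, with the pendant node `none`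
pointing to `some v`. -/
def pendantLift {V : Type*} (v : V) (X : V → Option V) : Option V → Option (Option V)
  | none => some (some v)
  | some u => (X u).map some

@[simp] lemma pendantLift_none {V : Type*} (v : V) (X : V → Option V) :
    pendantLift v X none = some (some v) := rfl

@[simp] lemma pendantLift_some {V : Type*} (v : V) (X : V → Option V) (u : V) :
    pendantLift v X (some u) = (X u).map some := rfl

lemma reach_lift {V : Type*} (X : V → Option V) (X' : Option V → Option (Option V))
    (hX' : ∀ u : V, X' (some u) = (X u).map some) (x y : V)
    (h : Relation.ReflTransGen (fun a b => X b = some a) x y) :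
    Relation.ReflTransGen (fun a b => X' b = some a) (some x) (some y) := by
  induction h with
  | refl => exact .refl
  | tail _ hstep ih => exact ih.tail (by simp [hX', hstep])

lemma reach_unlift {V : Type*} (X : V → Option V) (X' : Option V → Option (Option V))
    (hX' : ∀ u : V, X' (some u) = (X u).map some) (c : Option V) (x : V)
    (h : Relation.ReflTransGen (fun a b => X' b = some a) (some x) c) :
    ∀ y : V, c = some y → Relation.ReflTransGen (fun a b => X b = some a) x y := by
  induction h with
  | refl => intro y hy; injection hy with hy; subst hy; exact .refl
  | @tail b c _ hstep ih =>
      intro y hy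
      subst hy
      rw [hX' y] at hstep
      obtain ⟨b', hb'⟩ : ∃ b', X y = some b' := by
        cases h' : X y with
        | none => rw [h'] at hstep; simp at hstep
        | some b' => exact ⟨b', rfl⟩
      rw [hb'] at hstep
      simp only [Option.map_some] at hstep
      injection hstep with hstep
      exact (ih b' hstep.symm).tail hb'

/-- Adding a pendant node `⋆` attached to `v` by an edge of weight `r` scales the
live-edge DLT influence: `F^{w'}_{⋆}(S) = r · F^{w}_{v}(S)`.  Here `⋆` is modeled
as `none : Option V` and each original node `u` as `some u`. -/
theorem dlt_influence_pendant_transform {V : Type*} [Fintype V] [DecidableEq V]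
    (w : V → V → ℝ) (hw0 : ∀ u v, 0 ≤ w u v) (hw1 : ∀ v, ∑ u, w u v ≤ 1)
    (v : V) (r : ℝ) (hr : r ∈ Set.Icc (0 : ℝ) 1)
    (w' : Option V → Option V → ℝ)
    (hVV : ∀ u v'' : V, w' (some u) (some v'') = w u v'')
    (hvstar : w' (some v) none = r)
    (hother : ∀ u : V, u ≠ v → w' (some u) none = 0)
    (hstar : ∀ z : Option V, w' none z = 0)
    (S : Finset V) :
    dltInf w' (S.image some) (none : Option V) = r * dltInf w S v := by
  classical
  set F : (Option V → Option (Option V)) → ℝ := fun X' =>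
    dltProb w' X' * (if dltReach X' (S.image some) none then 1 else 0) with hF
  have hinj : Function.Injective (pendantLift v : (V → Option V) → _) := by
    intro X X' h
    funext u
    have := congrFun h (some u)
    simp only [pendantLift_some] at this
    exact Option.map_injective (Option.some_injective V) this
  -- terms outside the image of `pendantLift v` vanish
  have hzero : ∀ X' ∈ (Finset.univ : Finset (Option V → Option (Option V))),
      X' ∉ Finset.univ.image (pendantLift v) → F X' = 0 := by
    intro X' _ hnot
    by_cases hreach : dltReach X' (S.image some) none
    · -- reach gives `X' none = some b`
      obtain ⟨s, hs, hpath⟩ := hreach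
      obtain ⟨s₀, hs₀, rfl⟩ := Finset.mem_image.mp hs
      rcases hpath.cases_tail with heq | ⟨b, hb, hstep⟩
      · exact absurd heq (by simp)
      · -- hstep : X' none = some b
        by_cases hprob : dltProb w' X' = 0
        · simp [hF, hprob]
        · exfalso
          -- no factor of the product is zero
          have hfac : ∀ z : Option V, dltQ w' z (X' z) ≠ 0 := by
            intro z hz
            exact hprob (Finset.prod_eq_zero (Finset.mem_univ z) hz)
          -- hence `X' none = some (some v)`
          have hbv : b = some v := by
            have h0 := hfac none
            rw [hstep] at h0
            cases b with
            | none => exact absurd (by simp [dltQ, hstar]) h0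
            | some u =>
              by_cases huv : u = v
              · rw [huv]
              · exact absurd (by simp [dltQ, hother u huv]) h0
          -- and no `X' (some u)` is `some none`
          have hsome : ∀ u : V, X' (some u) ≠ some none := by
            intro u hu
            have h0 := hfac (some u)
            rw [hu] at h0
            exact h0 (by simp [dltQ, hstar])
          apply hnot
          refine Finset.mem_image.mpr ⟨fun u => (X' (some u)).join, Finset.mem_univ _, ?_⟩
          funext z
          cases z with
          | none => simp [pendantLift_none, hstep, hbv]
          | some u =>
            simp only [pendantLift_some]
            cases h' : X' (some u) with
            | none => simp
            | some c =>
              cases c with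
              | none => exact absurd h' (hsome u)
              | some a => simp
    · simp [hF, hreach]
  have key : dltInf w' (S.image some) (none : Option V)
      = ∑ X : V → Option V, F (pendantLift v X) := by
    rw [dltInf]
    rw [← Finset.sum_subset (Finset.subset_univ (Finset.univ.image (pendantLift v))) hzero]
    rw [Finset.sum_image (fun a _ b _ h => hinj h)]
  rw [key]
  -- compute each term
  have hterm : ∀ X : V → Option V,
      F (pendantLift v X) = r * (dltProb w X * (if dltReach X S v then 1 else 0)) := by
    intro X
    have hprob : dltProb w' (pendantLift v X) = r * dltProb w X := by
      rw [dltProb, Fintype.prod_option]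
      have h1 : dltQ w' none (pendantLift v X none) = r := by
        simp [dltQ, hvstar]
      rw [h1, dltProb]
      congr 1
      apply Finset.prod_congr rfl
      intro u _
      cases h' : X u with
      | none =>
        simp only [pendantLift_some, h', Option.map_none, dltQ]
        rw [Fintype.sum_option, hstar]
        simp [hVV]
      | some b =>
        simp only [pendantLift_some, h', Option.map_some, dltQ]
        exact hVV b u
    have hiff : dltReach (pendantLift v X) (S.image some) none ↔ dltReach X S v := by
      constructor
      · rintro ⟨s, hs, hpath⟩
        obtain ⟨s₀, hs₀, rfl⟩ := Finset.mem_image.mp hs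
        rcases hpath.cases_tail with heq | ⟨b, hb, hstep⟩
        · exact absurd heq (by simp)
        · simp only [pendantLift_none] at hstep
          injection hstep with hstep
          subst hstep
          exact ⟨s₀, hs₀, reach_unlift X (pendantLift v X) (fun u => rfl) _ _ hb v rfl⟩
      · rintro ⟨s, hs, hpath⟩
        refine ⟨some s, Finset.mem_image.mpr ⟨s, hs, rfl⟩, ?_⟩
        exact (reach_lift X (pendantLift v X) (fun u => rfl) s v hpath).tail
          (by simp [pendantLift_none])
    rw [hF]
    simp only
    rw [hprob, if_congr hiff rfl rfl]
    ring
  rw [Finset.sum_congr rfl (fun X _ => hterm X), ← Finset.mul_sum, dltInf]
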